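/- arXiv:1711.01339 — 2 statements merged into one kernel-verified Lean document; each statement's English description precedes it below -/
import Mathlib

section
/- Let ℓ ≥ 1, let K ∈ GL(ℓ,F₂), and fix α ∈ (0,1) and z ∈ (0,1). Then for every m ≥ 0, E_z[g_α(Z_m)] ≤ (λ*_{α,K})^m · g_α(z). -/
open scoped Classical

noncomputable section

/-- Bit `i` (0-indexed; it represents the 1-indexed bit `i+1`) is decodable under the
kernel `K` and the erasure set `S`. -/
def Decodable (ℓ : ℕ) (K : Matrix (Fin ℓ) (Fin ℓ) (ZMod 2)) (i : Fin ℓ)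
    (S : Finset (Fin ℓ)) : Prop :=
  ∀ u u' : Fin ℓ → ZMod 2,
    (∀ j : Fin ℓ, j < i → u j = u' j) →
    (∀ j : Fin ℓ, j ∉ S → Matrix.vecMul u K j = Matrix.vecMul u' K j) →
    u i = u' i

/-- The polarization behavior `f_{K,i}(z)` of the kernel `K`. -/
def fK (ℓ : ℕ) (K : Matrix (Fin ℓ) (Fin ℓ) (ZMod 2)) (i : Fin ℓ) (z : ℝ) : ℝ :=
  ∑ S : Finset (Fin ℓ),
    if ¬ Decodable ℓ K i S then z ^ S.card * (1 - z) ^ (ℓ - S.card) else 0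

/-- The polarization process `Z_m(z, b)`. -/
def Zproc (ℓ : ℕ) (K : Matrix (Fin ℓ) (Fin ℓ) (ZMod 2)) (z : ℝ) :
    (m : ℕ) → (Fin m → Fin ℓ) → ℝ
  | 0, _ => z
  | m + 1, b => fK ℓ K (b (Fin.last m)) (Zproc ℓ K z m (fun j => b j.castSucc))

/-- `g_α(z) = z^α (1-z)^α`. -/
def gfun (α z : ℝ) : ℝ := z ^ α * (1 - z) ^ α

/-- `λ_{α,K}(z)`. -/
def lam (ℓ : ℕ) (K : Matrix (Fin ℓ) (Fin ℓ) (ZMod 2)) (α z : ℝ) : ℝ :=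
  ((1 / (ℓ : ℝ)) * ∑ i : Fin ℓ, gfun α (fK ℓ K i z)) / gfun α z

/-- `λ*_{α,K} = sup_{z ∈ (0,1)} λ_{α,K}(z)`. -/
def lamStar (ℓ : ℕ) (K : Matrix (Fin ℓ) (Fin ℓ) (ZMod 2)) (α : ℝ) : ℝ :=
  sSup (lam ℓ K α '' Set.Ioo 0 1)

/-- `E_z[h(Z_m)]`, the uniform average over branch sequences `b`. -/
def expZ (ℓ : ℕ) (K : Matrix (Fin ℓ) (Fin ℓ) (ZMod 2)) (z : ℝ) (m : ℕ) (h : ℝ → ℝ) : ℝ :=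
  (∑ b : Fin m → Fin ℓ, h (Zproc ℓ K z m b)) / (ℓ : ℝ) ^ m

-- total sum is 1
lemma sum_term (ℓ : ℕ) (z : ℝ) :
    ∑ S : Finset (Fin ℓ), z ^ S.card * (1 - z) ^ (ℓ - S.card) = 1 := by
  have h := Fintype.prod_add (fun _ : Fin ℓ => z) (fun _ : Fin ℓ => 1 - z)
  simp only [add_sub_cancel, Finset.prod_const, Finset.prod_const_one, Finset.card_compl,
    Fintype.card_fin, one_pow] at h
  exact h.symm

lemma decodable_empty (ℓ : ℕ) (K : Matrix.GeneralLinearGroup (Fin ℓ) (ZMod 2)) (i : Fin ℓ) :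
    Decodable ℓ (K : Matrix (Fin ℓ) (Fin ℓ) (ZMod 2)) i ∅ := by
  intro u u' _ h2
  have h : Matrix.vecMul u (K : Matrix (Fin ℓ) (Fin ℓ) (ZMod 2)) =
      Matrix.vecMul u' (K : Matrix (Fin ℓ) (Fin ℓ) (ZMod 2)) :=
    funext fun j => h2 j (Finset.notMem_empty j)
  have hu : ∀ v : Fin ℓ → ZMod 2,
      Matrix.vecMul (Matrix.vecMul v (K : Matrix (Fin ℓ) (Fin ℓ) (ZMod 2)))
        ((K⁻¹ : Matrix.GeneralLinearGroup (Fin ℓ) (ZMod 2)) :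
          Matrix (Fin ℓ) (Fin ℓ) (ZMod 2)) = v := by
    intro v
    rw [Matrix.vecMul_vecMul]
    have : (K : Matrix (Fin ℓ) (Fin ℓ) (ZMod 2)) *
        ((K⁻¹ : Matrix.GeneralLinearGroup (Fin ℓ) (ZMod 2)) :
          Matrix (Fin ℓ) (Fin ℓ) (ZMod 2)) = 1 := K.mul_inv
    rw [this, Matrix.vecMul_one]
  have : u = u' := by rw [← hu u, ← hu u', h]
  rw [this]

lemma not_decodable_univ (ℓ : ℕ) (K : Matrix (Fin ℓ) (Fin ℓ) (ZMod 2)) (i : Fin ℓ) :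
    ¬ Decodable ℓ K i Finset.univ := by
  intro h
  have := h (fun j => if j = i then 1 else 0) 0
    (fun j hj => by simp [Fin.ne_of_lt hj])
    (fun j hj => absurd (Finset.mem_univ j) hj)
  simp at this

lemma term_nonneg {ℓ : ℕ} {z : ℝ} (hz : z ∈ Set.Ioo (0:ℝ) 1) (S : Finset (Fin ℓ)) :
    0 ≤ z ^ S.card * (1 - z) ^ (ℓ - S.card) := by
  obtain ⟨h0, h1⟩ := hz
  have h2 : (0:ℝ) ≤ 1 - z := by linarith
  positivity

lemma sum_dec (ℓ : ℕ) (M : Matrix (Fin ℓ) (Fin ℓ) (ZMod 2)) (i : Fin ℓ) (z : ℝ) :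
    fK ℓ M i z + (∑ S : Finset (Fin ℓ),
      if Decodable ℓ M i S then z ^ S.card * (1 - z) ^ (ℓ - S.card) else 0) = 1 := by
  rw [fK, ← Finset.sum_add_distrib]
  refine Eq.trans (Finset.sum_congr rfl fun S _ => ?_) (sum_term ℓ z)
  by_cases hd : Decodable ℓ M i S <;> simp [hd]

lemma fK_mem (ℓ : ℕ) (K : Matrix.GeneralLinearGroup (Fin ℓ) (ZMod 2)) (i : Fin ℓ)
    {z : ℝ} (hz : z ∈ Set.Ioo (0:ℝ) 1) :
    fK ℓ (K : Matrix (Fin ℓ) (Fin ℓ) (ZMod 2)) i z ∈ Set.Ioo (0:ℝ) 1 := by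
  set M := (K : Matrix (Fin ℓ) (Fin ℓ) (ZMod 2)) with hM
  obtain ⟨hz0, hz1⟩ := hz
  have h1z : (0:ℝ) < 1 - z := by linarith
  constructor
  · have hmem : (if ¬ Decodable ℓ M i Finset.univ then
        z ^ (Finset.univ : Finset (Fin ℓ)).card *
          (1 - z) ^ (ℓ - (Finset.univ : Finset (Fin ℓ)).card) else 0) ≤
        ∑ S : Finset (Fin ℓ),
          if ¬ Decodable ℓ M i S then z ^ S.card * (1 - z) ^ (ℓ - S.card) else 0 :=
      Finset.single_le_sum (f := fun S : Finset (Fin ℓ) =>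
        if ¬ Decodable ℓ M i S then z ^ S.card * (1 - z) ^ (ℓ - S.card) else 0)
        (fun S _ => by
          by_cases h : Decodable ℓ M i S <;> simp [h, term_nonneg ⟨hz0, hz1⟩ S])
        (Finset.mem_univ (Finset.univ : Finset (Fin ℓ)))
    rw [if_pos (not_decodable_univ ℓ M i)] at hmem
    have hpos : (0:ℝ) < z ^ (Finset.univ : Finset (Fin ℓ)).card *
        (1 - z) ^ (ℓ - (Finset.univ : Finset (Fin ℓ)).card) := by positivity
    rw [fK]
    exact lt_of_lt_of_le hpos hmem
  · have hmem : (if Decodable ℓ M i ∅ then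
        z ^ (∅ : Finset (Fin ℓ)).card * (1 - z) ^ (ℓ - (∅ : Finset (Fin ℓ)).card) else 0) ≤
        ∑ S : Finset (Fin ℓ),
          if Decodable ℓ M i S then z ^ S.card * (1 - z) ^ (ℓ - S.card) else 0 :=
      Finset.single_le_sum (f := fun S : Finset (Fin ℓ) =>
        if Decodable ℓ M i S then z ^ S.card * (1 - z) ^ (ℓ - S.card) else 0)
        (fun S _ => by
          by_cases h : Decodable ℓ M i S <;> simp [h, term_nonneg ⟨hz0, hz1⟩ S])
        (Finset.mem_univ (∅ : Finset (Fin ℓ)))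
    rw [if_pos (decodable_empty ℓ K i)] at hmem
    have hpos : (0:ℝ) < z ^ (∅ : Finset (Fin ℓ)).card *
        (1 - z) ^ (ℓ - (∅ : Finset (Fin ℓ)).card) := by positivity
    have := sum_dec ℓ M i z
    linarith

-- upper bounds used for BddAbove
lemma fK_le (ℓ : ℕ) (K : Matrix.GeneralLinearGroup (Fin ℓ) (ZMod 2)) (i : Fin ℓ)
    {z : ℝ} (hz : z ∈ Set.Ioo (0:ℝ) 1) :
    fK ℓ (K : Matrix (Fin ℓ) (Fin ℓ) (ZMod 2)) i z ≤ 2 ^ ℓ * z := by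
  obtain ⟨hz0, hz1⟩ := hz
  set M := (K : Matrix (Fin ℓ) (Fin ℓ) (ZMod 2))
  have h1 : fK ℓ M i z ≤ ∑ _S : Finset (Fin ℓ), z := by
    refine Finset.sum_le_sum fun S _ => ?_
    by_cases hd : Decodable ℓ M i S
    · simp [hd]; linarith
    · have hS : S ≠ ∅ := by rintro rfl; exact hd (decodable_empty ℓ K i)
      have hc : 1 ≤ S.card := Finset.one_le_card.mpr (Finset.nonempty_of_ne_empty hS)
      simp only [hd, not_false_iff, if_true]
      calc z ^ S.card * (1 - z) ^ (ℓ - S.card) ≤ z ^ S.card * 1 := by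
            refine mul_le_mul_of_nonneg_left (pow_le_one₀ (by linarith) (by linarith))
              (by positivity)
        _ = z ^ S.card := mul_one _
        _ ≤ z ^ 1 := pow_le_pow_of_le_one (le_of_lt hz0) (le_of_lt hz1) hc
        _ = z := pow_one z
  calc fK ℓ M i z ≤ ∑ _S : Finset (Fin ℓ), z := h1
    _ = 2 ^ ℓ * z := by simp [Finset.card_univ, mul_comm]

lemma one_sub_fK_le (ℓ : ℕ) (K : Matrix.GeneralLinearGroup (Fin ℓ) (ZMod 2)) (i : Fin ℓ)
    {z : ℝ} (hz : z ∈ Set.Ioo (0:ℝ) 1) :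
    1 - fK ℓ (K : Matrix (Fin ℓ) (Fin ℓ) (ZMod 2)) i z ≤ 2 ^ ℓ * (1 - z) := by
  obtain ⟨hz0, hz1⟩ := hz
  set M := (K : Matrix (Fin ℓ) (Fin ℓ) (ZMod 2))
  have hrw : 1 - fK ℓ M i z = ∑ S : Finset (Fin ℓ),
      (if Decodable ℓ M i S then z ^ S.card * (1 - z) ^ (ℓ - S.card) else 0) := by
    have := sum_dec ℓ M i z
    linarith
  rw [hrw]
  have h1 : ∀ S : Finset (Fin ℓ),
      (if Decodable ℓ M i S then z ^ S.card * (1 - z) ^ (ℓ - S.card) else 0) ≤ 1 - z := by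
    intro S
    by_cases hd : Decodable ℓ M i S
    · have hS : S ≠ Finset.univ := fun h => not_decodable_univ ℓ M i (h ▸ hd)
      have hc : S.card < ℓ := by
        have := (Finset.card_lt_iff_ne_univ S).mpr hS
        simpa using this
      have hc1 : 1 ≤ ℓ - S.card := by omega
      simp only [hd, if_true]
      calc z ^ S.card * (1 - z) ^ (ℓ - S.card) ≤ 1 * (1 - z) ^ (ℓ - S.card) :=
            mul_le_mul_of_nonneg_right (pow_le_one₀ (le_of_lt hz0) (le_of_lt hz1))
              (pow_nonneg (by linarith) _)
        _ = (1 - z) ^ (ℓ - S.card) := one_mul _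
        _ ≤ (1 - z) ^ 1 := pow_le_pow_of_le_one (by linarith) (by linarith) hc1
        _ = 1 - z := pow_one _
    · simp [hd]; linarith
  calc ∑ S : Finset (Fin ℓ), (if Decodable ℓ M i S then z ^ S.card * (1 - z) ^ (ℓ - S.card) else 0)
      ≤ ∑ _S : Finset (Fin ℓ), (1 - z) := Finset.sum_le_sum fun S _ => h1 S
    _ = 2 ^ ℓ * (1 - z) := by simp [Finset.card_univ, mul_comm]; ring

-- ===== new part =====
lemma gfun_pos {α w : ℝ} (hw : w ∈ Set.Ioo (0:ℝ) 1) : 0 < gfun α w :=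
  mul_pos (Real.rpow_pos_of_pos hw.1 α) (Real.rpow_pos_of_pos (by linarith [hw.2]) α)

lemma gfun_fK_le (ℓ : ℕ) (K : Matrix.GeneralLinearGroup (Fin ℓ) (ZMod 2)) (i : Fin ℓ)
    {α w : ℝ} (hα : α ∈ Set.Ioo (0:ℝ) 1) (hw : w ∈ Set.Ioo (0:ℝ) 1) :
    gfun α (fK ℓ (K : Matrix (Fin ℓ) (Fin ℓ) (ZMod 2)) i w) ≤ 4 ^ ℓ * gfun α w := by
  set M := (K : Matrix (Fin ℓ) (Fin ℓ) (ZMod 2))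
  obtain ⟨hf0, hf1⟩ := fK_mem ℓ K i hw
  have hα0 := hα.1.le
  have h2 : (1:ℝ) ≤ 2 ^ ℓ := one_le_pow₀ (by norm_num)
  have hb : ((2:ℝ) ^ ℓ) ^ α ≤ 2 ^ ℓ := by
    calc ((2:ℝ) ^ ℓ) ^ α ≤ ((2:ℝ) ^ ℓ) ^ (1:ℝ) :=
          Real.rpow_le_rpow_of_exponent_le h2 hα.2.le
      _ = 2 ^ ℓ := Real.rpow_one _
  have e1 : (fK ℓ M i w) ^ α ≤ 2 ^ ℓ * w ^ α := by
    calc (fK ℓ M i w) ^ α ≤ (2 ^ ℓ * w) ^ α :=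
          Real.rpow_le_rpow hf0.le (fK_le ℓ K i hw) hα0
      _ = ((2:ℝ) ^ ℓ) ^ α * w ^ α := Real.mul_rpow (by positivity) hw.1.le
      _ ≤ 2 ^ ℓ * w ^ α :=
          mul_le_mul_of_nonneg_right hb (Real.rpow_nonneg hw.1.le α)
  have e2 : (1 - fK ℓ M i w) ^ α ≤ 2 ^ ℓ * (1 - w) ^ α := by
    calc (1 - fK ℓ M i w) ^ α ≤ (2 ^ ℓ * (1 - w)) ^ α :=
          Real.rpow_le_rpow (by linarith) (one_sub_fK_le ℓ K i hw) hα0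
      _ = ((2:ℝ) ^ ℓ) ^ α * (1 - w) ^ α := Real.mul_rpow (by positivity) (by linarith [hw.2])
      _ ≤ 2 ^ ℓ * (1 - w) ^ α :=
          mul_le_mul_of_nonneg_right hb (Real.rpow_nonneg (by linarith [hw.2]) α)
  have := mul_le_mul e1 e2 (Real.rpow_nonneg (by linarith [hf1]) α)
    (mul_nonneg (by positivity) (Real.rpow_nonneg hw.1.le α))
  calc gfun α (fK ℓ M i w) = (fK ℓ M i w) ^ α * (1 - fK ℓ M i w) ^ α := rfl
    _ ≤ (2 ^ ℓ * w ^ α) * (2 ^ ℓ * (1 - w) ^ α) := this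
    _ = 4 ^ ℓ * gfun α w := by rw [gfun]; ring_nf; rw [show (4:ℝ) = 2 * 2 by norm_num, mul_pow]; ring

lemma lam_bdd (ℓ : ℕ) (hℓ : 1 ≤ ℓ) (K : Matrix.GeneralLinearGroup (Fin ℓ) (ZMod 2))
    {α : ℝ} (hα : α ∈ Set.Ioo (0:ℝ) 1) :
    BddAbove (lam ℓ (K : Matrix (Fin ℓ) (Fin ℓ) (ZMod 2)) α '' Set.Ioo 0 1) := by
  refine ⟨4 ^ ℓ, ?_⟩
  rintro x ⟨w, hw, rfl⟩
  set M := (K : Matrix (Fin ℓ) (Fin ℓ) (ZMod 2))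
  have hg := gfun_pos (α := α) hw
  have hsum : ∑ i : Fin ℓ, gfun α (fK ℓ M i w) ≤ ∑ _i : Fin ℓ, 4 ^ ℓ * gfun α w :=
    Finset.sum_le_sum fun i _ => gfun_fK_le ℓ K i hα hw
  have hℓ0 : (0:ℝ) < ℓ := by exact_mod_cast hℓ
  rw [lam, div_le_iff₀ hg]
  calc (1 / (ℓ:ℝ)) * ∑ i : Fin ℓ, gfun α (fK ℓ M i w)
      ≤ (1 / (ℓ:ℝ)) * (ℓ * (4 ^ ℓ * gfun α w)) := by
        refine mul_le_mul_of_nonneg_left ?_ (by positivity)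
        simpa [Finset.sum_const, Finset.card_univ, nsmul_eq_mul] using hsum
    _ = 4 ^ ℓ * gfun α w := by field_simp
    _ = 4 ^ ℓ * gfun α w := rfl

lemma key (ℓ : ℕ) (hℓ : 1 ≤ ℓ) (K : Matrix.GeneralLinearGroup (Fin ℓ) (ZMod 2))
    {α w : ℝ} (hα : α ∈ Set.Ioo (0:ℝ) 1) (hw : w ∈ Set.Ioo (0:ℝ) 1) :
    ∑ i : Fin ℓ, gfun α (fK ℓ (K : Matrix (Fin ℓ) (Fin ℓ) (ZMod 2)) i w) ≤
      (ℓ : ℝ) * (lamStar ℓ (K : Matrix (Fin ℓ) (Fin ℓ) (ZMod 2)) α * gfun α w) := by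
  set M := (K : Matrix (Fin ℓ) (Fin ℓ) (ZMod 2))
  have hg := gfun_pos (α := α) hw
  have hℓ0 : (0:ℝ) < ℓ := by exact_mod_cast hℓ
  have hlam : lam ℓ M α w ≤ lamStar ℓ M α :=
    le_csSup (lam_bdd ℓ hℓ K hα) (Set.mem_image_of_mem _ hw)
  rw [lam, div_le_iff₀ hg] at hlam
  have := mul_le_mul_of_nonneg_left hlam hℓ0.le
  calc ∑ i : Fin ℓ, gfun α (fK ℓ M i w)
      = (ℓ:ℝ) * ((1 / (ℓ:ℝ)) * ∑ i : Fin ℓ, gfun α (fK ℓ M i w)) := by field_simp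
    _ ≤ (ℓ:ℝ) * (lamStar ℓ M α * gfun α w) := this

lemma lamStar_nonneg (ℓ : ℕ) (hℓ : 1 ≤ ℓ) (K : Matrix.GeneralLinearGroup (Fin ℓ) (ZMod 2))
    {α : ℝ} (hα : α ∈ Set.Ioo (0:ℝ) 1) :
    0 ≤ lamStar ℓ (K : Matrix (Fin ℓ) (Fin ℓ) (ZMod 2)) α := by
  set M := (K : Matrix (Fin ℓ) (Fin ℓ) (ZMod 2))
  have hw : (1/2 : ℝ) ∈ Set.Ioo (0:ℝ) 1 := by norm_num
  have h0 : 0 ≤ lam ℓ M α (1/2) := by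
    rw [lam]
    refine div_nonneg (mul_nonneg (by positivity) ?_) (gfun_pos hw).le
    exact Finset.sum_nonneg fun i _ => (gfun_pos (fK_mem ℓ K i hw)).le
  exact h0.trans (le_csSup (lam_bdd ℓ hℓ K hα) (Set.mem_image_of_mem _ hw))

lemma Zproc_mem (ℓ : ℕ) (K : Matrix.GeneralLinearGroup (Fin ℓ) (ZMod 2))
    {z : ℝ} (hz : z ∈ Set.Ioo (0:ℝ) 1) (m : ℕ) (b : Fin m → Fin ℓ) :
    Zproc ℓ (K : Matrix (Fin ℓ) (Fin ℓ) (ZMod 2)) z m b ∈ Set.Ioo (0:ℝ) 1 := by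
  induction m with
  | zero => exact hz
  | succ m ih => exact fK_mem ℓ K _ (ih _)


theorem stmt4 (ℓ : ℕ) (hℓ : 1 ≤ ℓ) (K : Matrix.GeneralLinearGroup (Fin ℓ) (ZMod 2))
    (α : ℝ) (hα : α ∈ Set.Ioo (0 : ℝ) 1) (z : ℝ) (hz : z ∈ Set.Ioo (0 : ℝ) 1) :
    ∀ m : ℕ, expZ ℓ (K : Matrix (Fin ℓ) (Fin ℓ) (ZMod 2)) z m (gfun α) ≤
      (lamStar ℓ (K : Matrix (Fin ℓ) (Fin ℓ) (ZMod 2)) α) ^ m * gfun α z := by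
  set M := (K : Matrix (Fin ℓ) (Fin ℓ) (ZMod 2)) with hM
  have hℓ0 : (0:ℝ) < ℓ := by exact_mod_cast hℓ
  have hls := lamStar_nonneg ℓ hℓ K hα
  intro m
  induction m with
  | zero => simp [expZ, Zproc]
  | succ m ih =>
    have hsum : ∑ b : Fin (m+1) → Fin ℓ, gfun α (Zproc ℓ M z (m+1) b)
        = ∑ b' : Fin m → Fin ℓ, ∑ i : Fin ℓ, gfun α (fK ℓ M i (Zproc ℓ M z m b')) := by
      rw [← Equiv.sum_comp (Fin.snocEquiv (fun _ => Fin ℓ))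
        (fun b => gfun α (Zproc ℓ M z (m+1) b))]
      rw [Fintype.sum_prod_type]
      rw [Finset.sum_comm]
      refine Finset.sum_congr rfl fun b' _ => Finset.sum_congr rfl fun i _ => ?_
      simp [Zproc, Fin.snocEquiv, Fin.snoc_last, Fin.snoc_castSucc]
    have hbound : ∑ b : Fin (m+1) → Fin ℓ, gfun α (Zproc ℓ M z (m+1) b)
        ≤ (ℓ:ℝ) * (lamStar ℓ M α * ∑ b' : Fin m → Fin ℓ, gfun α (Zproc ℓ M z m b')) := by
      rw [hsum, Finset.mul_sum, Finset.mul_sum]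
      exact Finset.sum_le_sum fun b' _ => key ℓ hℓ K hα (Zproc_mem ℓ K hz m b')
    have hdiv : expZ ℓ M z (m+1) (gfun α) ≤ lamStar ℓ M α * expZ ℓ M z m (gfun α) := by
      rw [expZ, expZ]
      rw [div_le_iff₀ (by positivity)]
      calc ∑ b : Fin (m+1) → Fin ℓ, gfun α (Zproc ℓ M z (m+1) b)
          ≤ (ℓ:ℝ) * (lamStar ℓ M α * ∑ b' : Fin m → Fin ℓ, gfun α (Zproc ℓ M z m b')) := hbound
        _ = lamStar ℓ M α * ((∑ b' : Fin m → Fin ℓ, gfun α (Zproc ℓ M z m b')) / (ℓ:ℝ) ^ m)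
            * (ℓ:ℝ) ^ (m+1) := by
            field_simp
            ring
    calc expZ ℓ M z (m+1) (gfun α) ≤ lamStar ℓ M α * expZ ℓ M z m (gfun α) := hdiv
      _ ≤ lamStar ℓ M α * (lamStar ℓ M α ^ m * gfun α z) :=
          mul_le_mul_of_nonneg_left ih hls
      _ = lamStar ℓ M α ^ (m+1) * gfun α z := by ring

end
end

section
/- Let ℓ ≥ 1, i ∈ {1,…,ℓ}, and z ∈ [0,1]. Then the average of f_{K,i}(z) over all K ∈ GL(ℓ,F₂), namely (1/|GL(ℓ,F₂)|)·Σ_{K ∈ GL(ℓ,F₂)} f_{K,i}(z), equals Σ_{s=0}^{ℓ} C(ℓ,s)·z^s·(1−z)^{ℓ−s}·p_{i|s}, where C(ℓ,s) is the binomial coefficient. -/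
open scoped Classical

noncomputable section

/-- `E_j`: the span of the first `j` standard basis vectors of `F₂^ℓ`. -/
def Ej (ℓ j : ℕ) : Submodule (ZMod 2) (Fin ℓ → ZMod 2) :=
  Submodule.span (ZMod 2) {v | ∃ k : Fin ℓ, (k : ℕ) < j ∧ v = Pi.single k 1}

/-- The average conditional erasure probability `p_{i|s}` (with `i` 1-indexed): the fraction
of `(ℓ-s)`-dimensional subspaces `R` of `F₂^ℓ` with `R ∩ (E_i \ E_{i-1}) = ∅`. -/
def pis (ℓ i s : ℕ) : ℝ :=
  (Nat.card {R : Submodule (ZMod 2) (Fin ℓ → ZMod 2) //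
      Module.finrank (ZMod 2) ↥R = ℓ - s ∧
      (R : Set (Fin ℓ → ZMod 2)) ∩ ((Ej ℓ i : Set (Fin ℓ → ZMod 2)) \
        (Ej ℓ (i - 1) : Set (Fin ℓ → ZMod 2))) = ∅} : ℝ) /
  (Nat.card {R : Submodule (ZMod 2) (Fin ℓ → ZMod 2) //
      Module.finrank (ZMod 2) ↥R = ℓ - s} : ℝ)

/-- The 2-Gaussian binomial coefficient `[a choose t]₂`, as a real number. -/
def gaussBinom (a t : ℕ) : ℝ :=
  ∏ j ∈ Finset.range t, ((2 ^ a - 2 ^ j : ℝ) / (2 ^ t - 2 ^ j : ℝ))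

/-- The average erasure probability `F_i(z)` of the `i`-th bit-channel (`i` 1-indexed). -/
def Favg (ℓ i : ℕ) (z : ℝ) : ℝ :=
  ∑ s ∈ Finset.range (ℓ + 1), (Nat.choose ℓ s : ℝ) * z ^ s * (1 - z) ^ (ℓ - s) * pis ℓ i s

open Module Matrix Submodule

variable {ℓ : ℕ}

instance : Finite (Submodule (ZMod 2) (Fin ℓ → ZMod 2)) :=
  Finite.of_injective (fun U => (U : Set (Fin ℓ → ZMod 2))) SetLike.coe_injective

noncomputable instance : Fintype (Submodule (ZMod 2) (Fin ℓ → ZMod 2)) := Fintype.ofFinite _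

/-- orthogonal complement w.r.t. the standard dot product over `ZMod 2`. -/
def perp (U : Submodule (ZMod 2) (Fin ℓ → ZMod 2)) : Submodule (ZMod 2) (Fin ℓ → ZMod 2) where
  carrier := {v | ∀ u ∈ U, u ⬝ᵥ v = 0}
  add_mem' := by
    intro a b ha hb u hu
    rw [dotProduct_add, ha u hu, hb u hu, add_zero]
  zero_mem' := by intro u hu; simp
  smul_mem' := by
    intro c a ha u hu
    rw [dotProduct_smul, ha u hu, smul_zero]

lemma mem_perp {U : Submodule (ZMod 2) (Fin ℓ → ZMod 2)} {v : Fin ℓ → ZMod 2} :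
    v ∈ perp U ↔ ∀ u ∈ U, u ⬝ᵥ v = 0 := Iff.rfl

lemma le_perp_perp (U : Submodule (ZMod 2) (Fin ℓ → ZMod 2)) : U ≤ perp (perp U) := by
  intro u hu v hv
  rw [dotProduct_comm]
  exact hv u hu

lemma perp_antitone {U W : Submodule (ZMod 2) (Fin ℓ → ZMod 2)} (h : U ≤ W) :
    perp W ≤ perp U := fun v hv u hu => hv u (h hu)

lemma toDualEquiv_apply_eq_dot (v u : Fin ℓ → ZMod 2) :
    (Pi.basisFun (ZMod 2) (Fin ℓ)).toDualEquiv v u = u ⬝ᵥ v := by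
  have hu : u = ∑ j : Fin ℓ, u j • (Pi.basisFun (ZMod 2) (Fin ℓ)) j := by
    ext k
    simp [Pi.basisFun_apply, Finset.sum_apply, Pi.single_apply]
  calc (Pi.basisFun (ZMod 2) (Fin ℓ)).toDualEquiv v u
      = (Pi.basisFun (ZMod 2) (Fin ℓ)).toDual v u := rfl
    _ = u ⬝ᵥ v := by
        conv_lhs => rw [hu, map_sum]
        rw [dotProduct]
        refine Finset.sum_congr rfl fun j _ => ?_
        rw [_root_.map_smul, Basis.toDual_apply_left, Pi.basisFun_repr, smul_eq_mul]

lemma perp_eq_map (U : Submodule (ZMod 2) (Fin ℓ → ZMod 2)) :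
    perp U = U.dualAnnihilator.map
      ((Pi.basisFun (ZMod 2) (Fin ℓ)).toDualEquiv.symm : _ →ₗ[ZMod 2] _) := by
  rw [← Submodule.comap_equiv_eq_map_symm]
  ext v
  rw [mem_perp, Submodule.mem_comap, Submodule.mem_dualAnnihilator]
  simp only [LinearEquiv.coe_coe]
  constructor
  · intro h w hw
    rw [toDualEquiv_apply_eq_dot]
    exact h w hw
  · intro h u hu
    have := h u hu
    rwa [toDualEquiv_apply_eq_dot] at this

lemma finrank_perp_add (U : Submodule (ZMod 2) (Fin ℓ → ZMod 2)) :
    finrank (ZMod 2) (perp U) + finrank (ZMod 2) U = ℓ := by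
  rw [perp_eq_map, LinearEquiv.finrank_map_eq (Pi.basisFun (ZMod 2) (Fin ℓ)).toDualEquiv.symm U.dualAnnihilator]
  have h : finrank (ZMod 2) ((Fin ℓ → ZMod 2) ⧸ U) = finrank (ZMod 2) U.dualAnnihilator :=
    (Subspace.quotEquivAnnihilator U).finrank_eq
  have h2 := Submodule.finrank_quotient_add_finrank U
  have h3 : finrank (ZMod 2) (Fin ℓ → ZMod 2) = ℓ := by simp
  omega

lemma perp_perp (U : Submodule (ZMod 2) (Fin ℓ → ZMod 2)) : perp (perp U) = U := by
  have h1 := finrank_perp_add U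
  have h2 := finrank_perp_add (perp U)
  exact (Submodule.eq_of_le_of_finrank_le (le_perp_perp U) (by omega)).symm

lemma perp_le_perp_iff {U W : Submodule (ZMod 2) (Fin ℓ → ZMod 2)} :
    perp U ≤ perp W ↔ W ≤ U := by
  constructor
  · intro h
    have := perp_antitone h
    rwa [perp_perp, perp_perp] at this
  · exact perp_antitone

lemma perp_inj {U W : Submodule (ZMod 2) (Fin ℓ → ZMod 2)} (h : perp U = perp W) : U = W := by
  have := congrArg perp h
  rwa [perp_perp, perp_perp] at this

lemma perp_inf (U W : Submodule (ZMod 2) (Fin ℓ → ZMod 2)) :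
    perp (U ⊓ W) = perp U ⊔ perp W := by
  apply le_antisymm
  · have h : perp (perp U ⊔ perp W) ≤ U ⊓ W :=
      le_inf (le_trans (perp_antitone le_sup_left) (le_of_eq (perp_perp U)))
        (le_trans (perp_antitone le_sup_right) (le_of_eq (perp_perp W)))
    have h2 := perp_antitone h
    rwa [perp_perp] at h2
  · exact sup_le (perp_antitone inf_le_left) (perp_antitone inf_le_right)

/-- The subspace of vectors vanishing on coordinates satisfying `P`. -/
def coZero (P : Fin ℓ → Prop) : Submodule (ZMod 2) (Fin ℓ → ZMod 2) where
  carrier := {v | ∀ k, P k → v k = 0}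
  add_mem' := by intro a b ha hb k hk; simp [ha k hk, hb k hk]
  zero_mem' := by intro k _; rfl
  smul_mem' := by intro c a ha k hk; simp [ha k hk]

lemma mem_coZero {P : Fin ℓ → Prop} {v : Fin ℓ → ZMod 2} :
    v ∈ coZero P ↔ ∀ k, P k → v k = 0 := Iff.rfl

lemma single_eq_smul (k : Fin ℓ) (c : ZMod 2) :
    Pi.single k c = c • (Pi.single k 1 : Fin ℓ → ZMod 2) := by
  ext k'
  by_cases h : k' = k <;> simp [Pi.single_apply, h, mul_comm]

lemma coZero_le_span {P : Fin ℓ → Prop} :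
    coZero P ≤ Submodule.span (ZMod 2) {v | ∃ k : Fin ℓ, ¬ P k ∧ v = Pi.single k 1} := by
  intro v hv
  have hv2 : v = ∑ k : Fin ℓ, Pi.single k (v k) := (Finset.univ_sum_single v).symm
  rw [hv2]
  apply Submodule.sum_mem
  intro k _
  by_cases h : P k
  · rw [hv k h]
    simp
  · rw [single_eq_smul]
    exact Submodule.smul_mem _ _ (Submodule.subset_span ⟨k, h, rfl⟩)

lemma Ej_eq_coZero (j : ℕ) : Ej ℓ j = coZero (fun k => j ≤ (k : ℕ)) := by
  apply le_antisymm
  · rw [Ej, Submodule.span_le]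
    rintro v ⟨k, hk, rfl⟩
    intro k' hk'
    have : k' ≠ k := by
      intro h; subst h; omega
    simp [Pi.single_apply, this]
  · have := coZero_le_span (ℓ := ℓ) (P := fun k => j ≤ (k : ℕ))
    intro v hv
    have h2 := this hv
    rw [Ej]
    convert h2 using 3
    ext w
    constructor
    · rintro ⟨k, hk, rfl⟩; exact ⟨k, by omega, rfl⟩
    · rintro ⟨k, hk, rfl⟩; exact ⟨k, by omega, rfl⟩

lemma mem_Ej_iff {j : ℕ} {v : Fin ℓ → ZMod 2} :
    v ∈ Ej ℓ j ↔ ∀ k : Fin ℓ, j ≤ (k : ℕ) → v k = 0 := by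
  rw [Ej_eq_coZero]; rfl

lemma perp_Ej (j : ℕ) : perp (Ej ℓ j) = coZero (fun k => (k : ℕ) < j) := by
  apply le_antisymm
  · intro v hv k hk
    have hm : (Pi.single k 1 : Fin ℓ → ZMod 2) ∈ Ej ℓ j :=
      Submodule.subset_span ⟨k, hk, rfl⟩
    have := hv _ hm
    rwa [single_dotProduct, one_mul] at this
  · intro v hv u hu
    rw [mem_Ej_iff] at hu
    rw [dotProduct]
    apply Finset.sum_eq_zero
    intro k _
    by_cases h : (k : ℕ) < j
    · rw [hv k h, mul_zero]
    · rw [hu k (by omega), zero_mul]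

lemma perp_coZero_lt (j : ℕ) : perp (coZero (fun k : Fin ℓ => (k : ℕ) < j)) = Ej ℓ j := by
  rw [← perp_Ej, perp_perp]

lemma zmod2_ne_zero {x : ZMod 2} (h : x ≠ 0) : x = 1 := by revert x; decide

lemma Ej_mono {j j' : ℕ} (h : j ≤ j') : Ej ℓ j ≤ Ej ℓ j' := by
  intro v hv
  rw [mem_Ej_iff] at *
  intro k hk
  exact hv k (by omega)

lemma dual_cond (i : Fin ℓ) (U : Submodule (ZMod 2) (Fin ℓ → ZMod 2)) :
    (∃ v ∈ U, (∀ j : Fin ℓ, j < i → v j = 0) ∧ v i = 1) ↔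
      ((perp U : Set (Fin ℓ → ZMod 2)) ∩
        ((Ej ℓ ((i : ℕ) + 1) : Set (Fin ℓ → ZMod 2)) \
          (Ej ℓ (i : ℕ) : Set (Fin ℓ → ZMod 2))) = ∅) := by
  set F : Submodule (ZMod 2) (Fin ℓ → ZMod 2) := coZero (fun k => (k : ℕ) < (i : ℕ)) with hF
  set F' : Submodule (ZMod 2) (Fin ℓ → ZMod 2) :=
    coZero (fun k => (k : ℕ) < (i : ℕ) + 1) with hF'
  have claimA : (∃ v ∈ U, (∀ j : Fin ℓ, j < i → v j = 0) ∧ v i = 1) ↔ ¬ (U ⊓ F ≤ F') := by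
    constructor
    · rintro ⟨v, hvU, hvlow, hvi⟩ hle
      have hvF : v ∈ F := by
        intro k hk
        exact hvlow k (by rwa [Fin.lt_def])
      have := hle (Submodule.mem_inf.2 ⟨hvU, hvF⟩) i (by omega)
      rw [hvi] at this
      exact one_ne_zero this
    · intro h
      rw [SetLike.not_le_iff_exists] at h
      obtain ⟨v, hv, hv'⟩ := h
      rw [Submodule.mem_inf] at hv
      refine ⟨v, hv.1, fun j hj => hv.2 j (by rwa [Fin.lt_def] at hj), ?_⟩
      apply zmod2_ne_zero
      intro hvi
      apply hv'
      intro k hk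
      rcases Nat.lt_or_ge (k : ℕ) (i : ℕ) with h1 | h1
      · exact hv.2 k h1
      · have : k = i := Fin.ext (by omega)
        rwa [this]
  have claimB : (U ⊓ F ≤ F') ↔
      perp U ⊔ Ej ℓ (i : ℕ) = perp U ⊔ Ej ℓ ((i : ℕ) + 1) := by
    have hFF : F' ≤ F := by
      intro v hv k hk
      exact hv k (by omega)
    have h1 : (U ⊓ F ≤ F') ↔ U ⊓ F = U ⊓ F' := by
      constructor
      · intro h
        exact le_antisymm (le_inf inf_le_left h) (inf_le_inf_left U hFF)
      · intro h
        rw [h]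
        exact le_trans inf_le_right (le_refl F')
    rw [h1]
    constructor
    · intro h
      have := congrArg perp h
      rwa [perp_inf, perp_inf, hF, hF', perp_coZero_lt, perp_coZero_lt] at this
    · intro h
      apply perp_inj
      rwa [perp_inf, perp_inf, hF, hF', perp_coZero_lt, perp_coZero_lt]
  have claimC : (perp U ⊔ Ej ℓ (i : ℕ) = perp U ⊔ Ej ℓ ((i : ℕ) + 1)) ↔
      ∃ r ∈ perp U, r ∈ Ej ℓ ((i : ℕ) + 1) ∧ r ∉ Ej ℓ (i : ℕ) := by
    constructor
    · intro h
      have hei : (Pi.single i 1 : Fin ℓ → ZMod 2) ∈ perp U ⊔ Ej ℓ (i : ℕ) := by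
        rw [h]
        exact Submodule.mem_sup_right (Submodule.subset_span ⟨i, by omega, rfl⟩)
      rw [Submodule.mem_sup] at hei
      obtain ⟨r, hr, w, hw, hrw⟩ := hei
      have hwi : w i = 0 := mem_Ej_iff.1 hw i (le_refl _)
      refine ⟨r, hr, ?_, ?_⟩
      · rw [mem_Ej_iff]
        intro k hk
        have h1 : r k + w k = (Pi.single i 1 : Fin ℓ → ZMod 2) k := by
          have := congrFun hrw k
          simpa using this
        have h2 : w k = 0 := mem_Ej_iff.1 hw k (by omega)
        have h3 : (Pi.single i 1 : Fin ℓ → ZMod 2) k = 0 := by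
          have : k ≠ i := by intro h; subst h; omega
          simp [Pi.single_apply, this]
        rw [h2, h3, add_zero] at h1
        exact h1
      · intro hmem
        have h1 : r i + w i = (Pi.single i 1 : Fin ℓ → ZMod 2) i := by
          have := congrFun hrw i
          simpa using this
        rw [mem_Ej_iff.1 hmem i (le_refl _), hwi, add_zero] at h1
        simp at h1
    · rintro ⟨r, hrU, hr1, hr0⟩
      have hri : r i = 1 := by
        apply zmod2_ne_zero
        intro hri
        apply hr0
        rw [mem_Ej_iff]
        intro k hk
        rcases Nat.eq_or_lt_of_le hk with h1 | h1
        · have : k = i := Fin.ext h1.symm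
          rwa [this]
        · exact mem_Ej_iff.1 hr1 k (by omega)
      apply le_antisymm
      · exact sup_le_sup_left (Ej_mono (by omega)) _
      · apply sup_le le_sup_left
        intro w hw
        by_cases hwi : w i = 0
        · apply Submodule.mem_sup_right
          rw [mem_Ej_iff]
          intro k hk
          rcases Nat.eq_or_lt_of_le hk with h1 | h1
          · have : k = i := Fin.ext h1.symm
            rwa [this]
          · exact mem_Ej_iff.1 hw k (by omega)
        · have hwi1 : w i = 1 := zmod2_ne_zero hwi
          have hw2 : w - r ∈ Ej ℓ (i : ℕ) := by
            rw [mem_Ej_iff]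
            intro k hk
            rcases Nat.eq_or_lt_of_le hk with h1 | h1
            · have hk2 : k = i := Fin.ext h1.symm
              subst hk2
              simp [hwi1, hri]
            · have := mem_Ej_iff.1 hw k (by omega)
              have := mem_Ej_iff.1 hr1 k (by omega)
              simp_all
          have : w = r + (w - r) := by ring
          rw [this]
          exact Submodule.add_mem _ (Submodule.mem_sup_left hrU) (Submodule.mem_sup_right hw2)
  rw [claimA, claimB, claimC]
  rw [Set.eq_empty_iff_forall_notMem]
  constructor
  · intro h r hr
    rcases hr with ⟨hrU, h1, h2⟩
    exact h ⟨r, hrU, h1, h2⟩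
  · rintro h ⟨r, hrU, h1, h2⟩
    exact h r ⟨hrU, h1, h2⟩

/-- The subspace of vectors supported on `S`. -/
def VS (S : Finset (Fin ℓ)) : Submodule (ZMod 2) (Fin ℓ → ZMod 2) :=
  coZero (fun k => k ∉ S)

lemma not_decodable_iff (K : Matrix (Fin ℓ) (Fin ℓ) (ZMod 2)) (i : Fin ℓ)
    (S : Finset (Fin ℓ)) :
    ¬ Decodable ℓ K i S ↔
      ∃ v, (∀ j : Fin ℓ, j < i → v j = 0) ∧ v i = 1 ∧ Matrix.vecMul v K ∈ VS S := by
  constructor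
  · intro h
    rw [Decodable] at h
    push_neg at h
    obtain ⟨u, u', h1, h2, h3⟩ := h
    refine ⟨u - u', fun j hj => by rw [Pi.sub_apply, h1 j hj, sub_self], ?_, ?_⟩
    · apply zmod2_ne_zero
      rw [Pi.sub_apply, sub_ne_zero]
      exact h3
    · intro k hk
      rw [Matrix.sub_vecMul, Pi.sub_apply, h2 k hk, sub_self]
  · rintro ⟨v, h1, h2, h3⟩ hdec
    have := hdec v 0 (fun j hj => by rw [h1 j hj]; rfl)
      (fun j hj => by rw [Matrix.zero_vecMul]; exact h3 j hj)
    rw [h2] at this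
    exact one_ne_zero (this.trans rfl)

/-- `v ↦ v * K` as a linear equivalence, for `K ∈ GL`. -/
def phiEquiv (K : Matrix.GeneralLinearGroup (Fin ℓ) (ZMod 2)) :
    (Fin ℓ → ZMod 2) ≃ₗ[ZMod 2] (Fin ℓ → ZMod 2) :=
  LinearEquiv.ofLinear
    (Matrix.vecMulLinear (K : Matrix (Fin ℓ) (Fin ℓ) (ZMod 2)))
    (Matrix.vecMulLinear ((K⁻¹ : Matrix.GeneralLinearGroup (Fin ℓ) (ZMod 2)) :
      Matrix (Fin ℓ) (Fin ℓ) (ZMod 2)))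
    (by
      ext v
      simp only [LinearMap.comp_apply, Matrix.vecMulLinear_apply, LinearMap.id_apply,
        Matrix.vecMul_vecMul]
      rw [show ((K⁻¹ : Matrix.GeneralLinearGroup (Fin ℓ) (ZMod 2)) :
          Matrix (Fin ℓ) (Fin ℓ) (ZMod 2)) * (K : Matrix (Fin ℓ) (Fin ℓ) (ZMod 2)) = 1 from
        K.inv_mul, Matrix.vecMul_one])
    (by
      ext v
      simp only [LinearMap.comp_apply, Matrix.vecMulLinear_apply, LinearMap.id_apply,
        Matrix.vecMul_vecMul]
      rw [show (K : Matrix (Fin ℓ) (Fin ℓ) (ZMod 2)) *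
          ((K⁻¹ : Matrix.GeneralLinearGroup (Fin ℓ) (ZMod 2)) :
          Matrix (Fin ℓ) (Fin ℓ) (ZMod 2)) = 1 from K.mul_inv, Matrix.vecMul_one])

lemma phiEquiv_apply (K : Matrix.GeneralLinearGroup (Fin ℓ) (ZMod 2)) (v : Fin ℓ → ZMod 2) :
    phiEquiv K v = Matrix.vecMul v (K : Matrix (Fin ℓ) (Fin ℓ) (ZMod 2)) := rfl

/-- `VS S` is equivalent to functions on `S`. -/
def vsEquiv (S : Finset (Fin ℓ)) : VS S ≃ₗ[ZMod 2] ({x : Fin ℓ // x ∈ S} → ZMod 2) where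
  toFun v := fun j => v.1 j.1
  map_add' _ _ := rfl
  map_smul' _ _ := rfl
  invFun f := ⟨fun k => if h : k ∈ S then f ⟨k, h⟩ else 0, by
    intro k hk
    simp [dif_neg hk]⟩
  left_inv := by
    rintro ⟨v, hv⟩
    ext k
    by_cases h : k ∈ S
    · simp [dif_pos h]
    · simp [dif_neg h, hv k h]
  right_inv := by
    intro f
    ext j
    simp [dif_pos j.2]

lemma finrank_VS (S : Finset (Fin ℓ)) : finrank (ZMod 2) (VS S) = S.card := by
  rw [(vsEquiv S).finrank_eq, Module.finrank_pi]
  exact Fintype.card_coe S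

lemma exists_auto_map (U U' : Submodule (ZMod 2) (Fin ℓ → ZMod 2))
    (h : finrank (ZMod 2) U = finrank (ZMod 2) U') :
    ∃ g : (Fin ℓ → ZMod 2) ≃ₗ[ZMod 2] (Fin ℓ → ZMod 2),
      U.map (g : (Fin ℓ → ZMod 2) →ₗ[ZMod 2] (Fin ℓ → ZMod 2)) = U' := by
  obtain ⟨C, hC⟩ := Submodule.exists_isCompl U
  obtain ⟨C', hC'⟩ := Submodule.exists_isCompl U'
  have hcc : finrank (ZMod 2) C = finrank (ZMod 2) C' := by
    have e1 := Submodule.finrank_add_eq_of_isCompl hC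
    have e2 := Submodule.finrank_add_eq_of_isCompl hC'
    omega
  let eU : U ≃ₗ[ZMod 2] U' := LinearEquiv.ofFinrankEq _ _ h
  let eC : C ≃ₗ[ZMod 2] C' := LinearEquiv.ofFinrankEq _ _ hcc
  let g := (Submodule.prodEquivOfIsCompl U C hC).symm ≪≫ₗ (eU.prodCongr eC) ≪≫ₗ
    (Submodule.prodEquivOfIsCompl U' C' hC')
  have hle : U.map (g : (Fin ℓ → ZMod 2) →ₗ[ZMod 2] (Fin ℓ → ZMod 2)) ≤ U' := by
    rintro _ ⟨u, hu, rfl⟩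
    have h1 : (Submodule.prodEquivOfIsCompl U C hC).symm u = (⟨u, hu⟩, 0) :=
      Submodule.prodEquivOfIsCompl_symm_apply_left U C hC (⟨u, hu⟩ : U)
    have h2 : g u = (Submodule.prodEquivOfIsCompl U' C' hC') (eU ⟨u, hu⟩, eC 0) := by
      show (Submodule.prodEquivOfIsCompl U' C' hC')
        ((eU.prodCongr eC) ((Submodule.prodEquivOfIsCompl U C hC).symm u)) = _
      rw [h1]
      rfl
    rw [map_zero] at h2
    have h3 : g u = (eU ⟨u, hu⟩ : Fin ℓ → ZMod 2) := by
      rw [h2]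
      have := Submodule.coe_prodEquivOfIsCompl (p := U') (q := C') hC'
      rw [show (Submodule.prodEquivOfIsCompl U' C' hC') ((eU ⟨u, hu⟩ : U'), (0 : C'))
          = U'.subtype.coprod C'.subtype ((eU ⟨u, hu⟩ : U'), (0 : C')) by rw [← this]; rfl]
      simp
    show g u ∈ U'
    rw [h3]
    exact (eU ⟨u, hu⟩).2
  refine ⟨g, Submodule.eq_of_le_of_finrank_le hle ?_⟩
  rw [LinearEquiv.finrank_map_eq]
  omega

lemma exists_GL_map (U U' : Submodule (ZMod 2) (Fin ℓ → ZMod 2))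
    (h : finrank (ZMod 2) U = finrank (ZMod 2) U') :
    ∃ M : Matrix.GeneralLinearGroup (Fin ℓ) (ZMod 2),
      U.map ((phiEquiv M : (Fin ℓ → ZMod 2) →ₗ[ZMod 2] (Fin ℓ → ZMod 2))) = U' := by
  obtain ⟨g, hg⟩ := exists_auto_map U U' h
  set A := (LinearMap.toMatrix' (g : (Fin ℓ → ZMod 2) →ₗ[ZMod 2] (Fin ℓ → ZMod 2)))ᵀ with hA
  set B := (LinearMap.toMatrix' (g.symm : (Fin ℓ → ZMod 2) →ₗ[ZMod 2] (Fin ℓ → ZMod 2)))ᵀ with hB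
  have hAB : A * B = 1 := by
    rw [hA, hB, ← Matrix.transpose_mul, ← LinearMap.toMatrix'_comp]
    rw [show ((g.symm : (Fin ℓ → ZMod 2) →ₗ[ZMod 2] _).comp
        (g : (Fin ℓ → ZMod 2) →ₗ[ZMod 2] _)) = LinearMap.id from by
      refine LinearMap.ext fun v => ?_; simp]
    rw [LinearMap.toMatrix'_id, Matrix.transpose_one]
  have hBA : B * A = 1 := by
    rw [hA, hB, ← Matrix.transpose_mul, ← LinearMap.toMatrix'_comp]
    rw [show ((g : (Fin ℓ → ZMod 2) →ₗ[ZMod 2] _).comp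
        (g.symm : (Fin ℓ → ZMod 2) →ₗ[ZMod 2] _)) = LinearMap.id from by
      refine LinearMap.ext fun v => ?_; simp]
    rw [LinearMap.toMatrix'_id, Matrix.transpose_one]
  refine ⟨⟨A, B, hAB, hBA⟩, ?_⟩
  have hv : (phiEquiv (⟨A, B, hAB, hBA⟩ : Matrix.GeneralLinearGroup (Fin ℓ) (ZMod 2)) :
      (Fin ℓ → ZMod 2) →ₗ[ZMod 2] (Fin ℓ → ZMod 2)) =
      (g : (Fin ℓ → ZMod 2) →ₗ[ZMod 2] (Fin ℓ → ZMod 2)) := by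
    refine LinearMap.ext fun v => ?_
    show Matrix.vecMulLinear A v = g v
    rw [hA, Matrix.vecMulLinear_transpose, ← Matrix.toLin'_apply', Matrix.toLin'_toMatrix']
    rfl
  rw [hv, hg]

lemma phiEquiv_mul (M K : Matrix.GeneralLinearGroup (Fin ℓ) (ZMod 2)) :
    (phiEquiv (M * K) : (Fin ℓ → ZMod 2) →ₗ[ZMod 2] (Fin ℓ → ZMod 2)) =
      (phiEquiv K : (Fin ℓ → ZMod 2) →ₗ[ZMod 2] _).comp
        (phiEquiv M : (Fin ℓ → ZMod 2) →ₗ[ZMod 2] _) := by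
  refine LinearMap.ext fun v => ?_
  show Matrix.vecMul v ((M * K : Matrix.GeneralLinearGroup (Fin ℓ) (ZMod 2)) :
      Matrix (Fin ℓ) (Fin ℓ) (ZMod 2)) =
    Matrix.vecMul (Matrix.vecMul v (M : Matrix (Fin ℓ) (Fin ℓ) (ZMod 2)))
      (K : Matrix (Fin ℓ) (Fin ℓ) (ZMod 2))
  rw [Matrix.vecMul_vecMul]
  rfl

lemma phiEquiv_one :
    ((phiEquiv (1 : Matrix.GeneralLinearGroup (Fin ℓ) (ZMod 2))) :
      (Fin ℓ → ZMod 2) →ₗ[ZMod 2] (Fin ℓ → ZMod 2)) = LinearMap.id := by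
  refine LinearMap.ext fun v => ?_
  show Matrix.vecMul v ((1 : Matrix.GeneralLinearGroup (Fin ℓ) (ZMod 2)) :
    Matrix (Fin ℓ) (Fin ℓ) (ZMod 2)) = v
  rw [show ((1 : Matrix.GeneralLinearGroup (Fin ℓ) (ZMod 2)) :
    Matrix (Fin ℓ) (Fin ℓ) (ZMod 2)) = 1 from rfl, Matrix.vecMul_one]

lemma nat_card_subtype {α : Type*} [Fintype α] (p : α → Prop) [DecidablePred p] :
    Nat.card {x // p x} = (Finset.univ.filter p).card := by
  classical
  simp [Nat.card_eq_fintype_card, Fintype.card_subtype]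

set_option maxHeartbeats 1000000 in
lemma per_S (i : Fin ℓ) (S : Finset (Fin ℓ)) :
    ((Finset.univ.filter (fun K : Matrix.GeneralLinearGroup (Fin ℓ) (ZMod 2) =>
        ¬ Decodable ℓ (K : Matrix (Fin ℓ) (Fin ℓ) (ZMod 2)) i S)).card : ℝ) /
      (Fintype.card (Matrix.GeneralLinearGroup (Fin ℓ) (ZMod 2)) : ℝ)
      = pis ℓ ((i : ℕ) + 1) S.card := by
  set s := S.card with hs
  set Φ : Matrix.GeneralLinearGroup (Fin ℓ) (ZMod 2) → Submodule (ZMod 2) (Fin ℓ → ZMod 2) :=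
    fun K => perp ((VS S).comap
      (phiEquiv K : (Fin ℓ → ZMod 2) →ₗ[ZMod 2] (Fin ℓ → ZMod 2))) with hΦ
  have hrk : ∀ K : Matrix.GeneralLinearGroup (Fin ℓ) (ZMod 2),
      finrank (ZMod 2) ((VS S).comap
        (phiEquiv K : (Fin ℓ → ZMod 2) →ₗ[ZMod 2] (Fin ℓ → ZMod 2))) = s := by
    intro K
    rw [Submodule.comap_equiv_eq_map_symm, LinearEquiv.finrank_map_eq, finrank_VS]
  have hΦrk : ∀ K, finrank (ZMod 2) (Φ K) = ℓ - s := by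
    intro K
    have h1 := finrank_perp_add ((VS S).comap
      (phiEquiv K : (Fin ℓ → ZMod 2) →ₗ[ZMod 2] (Fin ℓ → ZMod 2)))
    rw [hrk K] at h1
    have h2 : s ≤ ℓ := by omega
    show finrank (ZMod 2) (perp ((VS S).comap
      (phiEquiv K : (Fin ℓ → ZMod 2) →ₗ[ZMod 2] (Fin ℓ → ZMod 2)))) = ℓ - s
    omega
  set Bad : Submodule (ZMod 2) (Fin ℓ → ZMod 2) → Prop := fun R =>
    (R : Set (Fin ℓ → ZMod 2)) ∩ ((Ej ℓ ((i : ℕ) + 1) : Set (Fin ℓ → ZMod 2)) \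
      (Ej ℓ (i : ℕ) : Set (Fin ℓ → ZMod 2))) = ∅ with hBad
  have hdec : ∀ K : Matrix.GeneralLinearGroup (Fin ℓ) (ZMod 2),
      (¬ Decodable ℓ (K : Matrix (Fin ℓ) (Fin ℓ) (ZMod 2)) i S) ↔ Bad (Φ K) := by
    intro K
    rw [not_decodable_iff]
    have := dual_cond i ((VS S).comap
      (phiEquiv K : (Fin ℓ → ZMod 2) →ₗ[ZMod 2] (Fin ℓ → ZMod 2)))
    constructor
    · rintro ⟨v, h1, h2, h3⟩
      exact this.1 ⟨v, h3, h1, h2⟩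
    · intro hb
      obtain ⟨v, hv, h1, h2⟩ := this.2 hb
      exact ⟨v, h1, h2, hv⟩
  have hfiber : ∀ (K : Matrix.GeneralLinearGroup (Fin ℓ) (ZMod 2))
      (R : Submodule (ZMod 2) (Fin ℓ → ZMod 2)), Φ K = R ↔
      (perp R).map (phiEquiv K : (Fin ℓ → ZMod 2) →ₗ[ZMod 2] (Fin ℓ → ZMod 2)) = VS S := by
    intro K R
    constructor
    · intro h
      have h2 : (VS S).comap
          (phiEquiv K : (Fin ℓ → ZMod 2) →ₗ[ZMod 2] (Fin ℓ → ZMod 2)) = perp R := by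
        rw [← h, hΦ, perp_perp]
      rw [← h2]
      exact Submodule.map_comap_eq_of_surjective (show Function.Surjective
        ⇑((phiEquiv K : (Fin ℓ → ZMod 2) →ₗ[ZMod 2] (Fin ℓ → ZMod 2))) from
        (phiEquiv K).surjective) _
    · intro h
      have h2 : (VS S).comap
          (phiEquiv K : (Fin ℓ → ZMod 2) →ₗ[ZMod 2] (Fin ℓ → ZMod 2)) = perp R := by
        rw [← h]
        exact Submodule.comap_map_eq_of_injective (show Function.Injective
          ⇑((phiEquiv K : (Fin ℓ → ZMod 2) →ₗ[ZMod 2] (Fin ℓ → ZMod 2))) from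
          (phiEquiv K).injective) (perp R)
      show perp ((VS S).comap
        (phiEquiv K : (Fin ℓ → ZMod 2) →ₗ[ZMod 2] (Fin ℓ → ZMod 2))) = R
      rw [h2, perp_perp]
  have hcard : ∀ R R' : Submodule (ZMod 2) (Fin ℓ → ZMod 2),
      finrank (ZMod 2) R = ℓ - s → finrank (ZMod 2) R' = ℓ - s →
      (Finset.univ.filter fun K => Φ K = R).card =
        (Finset.univ.filter fun K => Φ K = R').card := by
    intro R R' hR hR'
    have hperprk : finrank (ZMod 2) (perp R') = finrank (ZMod 2) (perp R) := by
      have h1 := finrank_perp_add R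
      have h2 := finrank_perp_add R'
      omega
    obtain ⟨M, hM⟩ := exists_GL_map (perp R') (perp R) hperprk
    apply Finset.card_bij' (fun K _ => M * K) (fun K _ => M⁻¹ * K)
    · intro K hK
      rw [Finset.mem_filter] at hK ⊢
      refine ⟨Finset.mem_univ _, ?_⟩
      rw [hfiber, phiEquiv_mul, Submodule.map_comp, hM, ← hfiber]
      exact hK.2
    · intro K hK
      rw [Finset.mem_filter] at hK ⊢
      refine ⟨Finset.mem_univ _, ?_⟩
      have hM' : Submodule.map
          ((phiEquiv M⁻¹) : (Fin ℓ → ZMod 2) →ₗ[ZMod 2] (Fin ℓ → ZMod 2)) (perp R) = perp R' := by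
        rw [← hM, ← Submodule.map_comp, ← phiEquiv_mul, mul_inv_cancel, phiEquiv_one,
          Submodule.map_id]
      rw [hfiber] at hK
      rw [hfiber, phiEquiv_mul, Submodule.map_comp, hM']
      exact hK.2
    · intro K hK
      rw [inv_mul_cancel_left]
    · intro K hK
      rw [mul_inv_cancel_left]
  set T := Finset.univ.filter (fun R : Submodule (ZMod 2) (Fin ℓ → ZMod 2) =>
      finrank (ZMod 2) R = ℓ - s) with hT
  have hmaps : ∀ K : Matrix.GeneralLinearGroup (Fin ℓ) (ZMod 2), Φ K ∈ T := fun K =>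
    Finset.mem_filter.2 ⟨Finset.mem_univ _, hΦrk K⟩
  set c := (Finset.univ.filter fun K : Matrix.GeneralLinearGroup (Fin ℓ) (ZMod 2) =>
      Φ K = Φ 1).card with hc
  have hfibc : ∀ R ∈ T, (Finset.univ.filter fun K => Φ K = R).card = c := by
    intro R hR
    rw [hc]
    exact hcard R (Φ 1) (Finset.mem_filter.1 hR).2 (hΦrk 1)
  have hGL : Fintype.card (Matrix.GeneralLinearGroup (Fin ℓ) (ZMod 2)) = T.card * c := by
    rw [← Finset.card_univ, Finset.card_eq_sum_card_fiberwise (fun K _ => hmaps K),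
      Finset.sum_congr rfl (fun R hR => hfibc R hR), Finset.sum_const, smul_eq_mul]
  have hN : (Finset.univ.filter (fun K : Matrix.GeneralLinearGroup (Fin ℓ) (ZMod 2) =>
      ¬ Decodable ℓ (K : Matrix (Fin ℓ) (Fin ℓ) (ZMod 2)) i S)).card
      = (T.filter Bad).card * c := by
    have he : Finset.univ.filter (fun K : Matrix.GeneralLinearGroup (Fin ℓ) (ZMod 2) =>
        ¬ Decodable ℓ (K : Matrix (Fin ℓ) (Fin ℓ) (ZMod 2)) i S)
        = Finset.univ.filter (fun K => Bad (Φ K)) := by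
      apply Finset.filter_congr
      intro K _
      exact hdec K
    have hsum : ∀ R ∈ T.filter Bad,
        ((Finset.univ.filter (fun K : Matrix.GeneralLinearGroup (Fin ℓ) (ZMod 2) =>
          Bad (Φ K))).filter (fun K => Φ K = R)).card = c := by
      intro R hR
      have h1 : (Finset.univ.filter (fun K : Matrix.GeneralLinearGroup (Fin ℓ) (ZMod 2) =>
          Bad (Φ K))).filter (fun K => Φ K = R)
          = Finset.univ.filter (fun K => Φ K = R) := by
        ext K
        simp only [Finset.mem_filter, Finset.mem_univ, true_and]
        constructor
        · rintro ⟨_, h⟩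
          exact h
        · intro h
          exact ⟨by rw [h]; exact (Finset.mem_filter.1 hR).2, h⟩
      rw [h1]
      exact hfibc R (Finset.mem_filter.1 hR).1
    rw [he, Finset.card_eq_sum_card_fiberwise
      (f := Φ) (t := T.filter Bad) (fun K hK => Finset.mem_filter.2
        ⟨hmaps K, (Finset.mem_filter.1 hK).2⟩),
      Finset.sum_congr rfl hsum, Finset.sum_const, smul_eq_mul]
  have hNE : Nonempty (Matrix.GeneralLinearGroup (Fin ℓ) (ZMod 2)) := ⟨1⟩
  have hGL0 : Fintype.card (Matrix.GeneralLinearGroup (Fin ℓ) (ZMod 2)) ≠ 0 :=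
    Fintype.card_ne_zero
  have hc0 : c ≠ 0 := by
    intro h0
    rw [h0, mul_zero] at hGL
    exact hGL0 hGL
  have hT0 : T.card ≠ 0 := by
    intro h0
    rw [h0, zero_mul] at hGL
    exact hGL0 hGL
  have hpis : pis ℓ ((i : ℕ) + 1) s = (((T.filter Bad).card : ℝ)) / ((T.card : ℝ)) := by
    have e1 : Finset.univ.filter (fun R : Submodule (ZMod 2) (Fin ℓ → ZMod 2) =>
        finrank (ZMod 2) R = ℓ - s ∧
        (R : Set (Fin ℓ → ZMod 2)) ∩ ((Ej ℓ ((i : ℕ) + 1) : Set (Fin ℓ → ZMod 2)) \ (Ej ℓ ((i : ℕ) + 1 - 1) : Set (Fin ℓ → ZMod 2))) = ∅) = T.filter Bad := by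
      rw [hT, Finset.filter_filter]
      apply Finset.filter_congr
      intro R _
      rw [hBad]
      simp only [Nat.add_sub_cancel]
    have e2 : Finset.univ.filter (fun R : Submodule (ZMod 2) (Fin ℓ → ZMod 2) =>
        finrank (ZMod 2) R = ℓ - s) = T := hT.symm
    rw [pis, nat_card_subtype, nat_card_subtype]
    rw [e1, e2]
  rw [hN, hGL, hpis, Nat.cast_mul, Nat.cast_mul]
  rw [mul_div_mul_right _ _ (show (c : ℝ) ≠ 0 from Nat.cast_ne_zero.2 hc0)]


theorem stmt9_aux (ℓ : ℕ) (hℓ : 1 ≤ ℓ) (i : Fin ℓ) (z : ℝ) (hz : z ∈ Set.Icc (0 : ℝ) 1) :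
    (1 / (Fintype.card (Matrix.GeneralLinearGroup (Fin ℓ) (ZMod 2)) : ℝ)) *
        ∑ K : Matrix.GeneralLinearGroup (Fin ℓ) (ZMod 2),
          fK ℓ (K : Matrix (Fin ℓ) (Fin ℓ) (ZMod 2)) i z =
      ∑ s ∈ Finset.range (ℓ + 1),
        (Nat.choose ℓ s : ℝ) * z ^ s * (1 - z) ^ (ℓ - s) * pis ℓ ((i : ℕ) + 1) s := by
  have hswap : ∑ K : Matrix.GeneralLinearGroup (Fin ℓ) (ZMod 2),
      fK ℓ (K : Matrix (Fin ℓ) (Fin ℓ) (ZMod 2)) i z = ∑ S : Finset (Fin ℓ),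
      ((Finset.univ.filter (fun K : Matrix.GeneralLinearGroup (Fin ℓ) (ZMod 2) =>
        ¬ Decodable ℓ (K : Matrix (Fin ℓ) (Fin ℓ) (ZMod 2)) i S)).card : ℝ)
        * (z ^ S.card * (1 - z) ^ (ℓ - S.card)) := by
    unfold fK
    rw [Finset.sum_comm]
    exact Finset.sum_congr rfl fun S _ => by
      rw [← Finset.sum_filter, Finset.sum_const, nsmul_eq_mul]
  rw [hswap, Finset.mul_sum]
  have hterm : ∀ S : Finset (Fin ℓ),
      1 / (Fintype.card (Matrix.GeneralLinearGroup (Fin ℓ) (ZMod 2)) : ℝ) *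
        (((Finset.univ.filter (fun K : Matrix.GeneralLinearGroup (Fin ℓ) (ZMod 2) =>
          ¬ Decodable ℓ (K : Matrix (Fin ℓ) (Fin ℓ) (ZMod 2)) i S)).card : ℝ)
          * (z ^ S.card * (1 - z) ^ (ℓ - S.card)))
      = (z ^ S.card * (1 - z) ^ (ℓ - S.card)) * pis ℓ ((i : ℕ) + 1) S.card := by
    intro S
    rw [← per_S i S]
    ring
  rw [Finset.sum_congr rfl fun S _ => hterm S]
  rw [← Finset.sum_fiberwise_of_maps_to (g := fun S : Finset (Fin ℓ) => S.card)
      (t := Finset.range (ℓ + 1)) (fun S _ => Finset.mem_range.2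
        (Nat.lt_succ_of_le (by simpa using Finset.card_le_univ S)))]
  refine Finset.sum_congr rfl fun n hn => ?_
  have hconst : ∀ S ∈ Finset.univ.filter (fun S : Finset (Fin ℓ) => S.card = n),
      z ^ S.card * (1 - z) ^ (ℓ - S.card) * pis ℓ ((i : ℕ) + 1) S.card
        = z ^ n * (1 - z) ^ (ℓ - n) * pis ℓ ((i : ℕ) + 1) n := by
    intro S hS
    rw [(Finset.mem_filter.1 hS).2]
  rw [Finset.sum_congr rfl hconst, Finset.sum_const, nsmul_eq_mul]
  have hcard : (Finset.univ.filter (fun S : Finset (Fin ℓ) => S.card = n)).card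
      = ℓ.choose n := by
    have he : Finset.univ.filter (fun S : Finset (Fin ℓ) => S.card = n)
        = Finset.powersetCard n Finset.univ := by
      ext S
      simp [Finset.mem_powersetCard, Finset.subset_univ]
    rw [he, Finset.card_powersetCard, Finset.card_univ, Fintype.card_fin]
  rw [hcard]
  ring

theorem stmt9 (ℓ : ℕ) (hℓ : 1 ≤ ℓ) (i : Fin ℓ) (z : ℝ) (hz : z ∈ Set.Icc (0 : ℝ) 1) :
    (1 / (Fintype.card (Matrix.GeneralLinearGroup (Fin ℓ) (ZMod 2)) : ℝ)) *
        ∑ K : Matrix.GeneralLinearGroup (Fin ℓ) (ZMod 2),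
          fK ℓ (K : Matrix (Fin ℓ) (Fin ℓ) (ZMod 2)) i z =
      ∑ s ∈ Finset.range (ℓ + 1),
        (Nat.choose ℓ s : ℝ) * z ^ s * (1 - z) ^ (ℓ - s) * pis ℓ ((i : ℕ) + 1) s := by
  exact stmt9_aux ℓ hℓ i z hz

end
end
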